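/- Let w ∈ S_n and 1 ≤ i ≤ n−1, and suppose that some reduced word for w contains the letter s_i exactly once. Then there exists w' in the subgroup generated by {s_j : j ≠ i} such that w'w equals one of the following multiplicity-free elements: s_i; or s_i s_{i−1}⋯s_{i−δ} for some δ ≥ 1; or s_i s_{i+1}⋯s_{i+δ} for some δ ≥ 1; or s_i s_{i−1}⋯s_{i−δ⁻} s_{i+1}⋯s_{i+δ⁺} for some δ⁻, δ⁺ ≥ 1. -/

import Mathlib

/-- The simple transposition `s_j = (j, j+1)` of `S_n` (here `n = m + 1` and the simple
transpositions are indexed 0-based by `j ∈ {0, …, m-1}`; out-of-range indices give `1`). -/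
def simpleT (m : ℕ) (j : ℕ) : Equiv.Perm (Fin (m + 1)) :=
  if h : j < m then Equiv.swap ⟨j, by omega⟩ ⟨j + 1, by omega⟩ else 1

/-- The product of the word `l` (a list of 0-based indices of simple transpositions). -/
def wordProd (m : ℕ) (l : List ℕ) : Equiv.Perm (Fin (m + 1)) :=
  (l.map (simpleT m)).prod

/-- `l` is a reduced word for `w`: it is a word in the simple transpositions whose product is
`w`, of minimal length among all such words. -/
def IsReducedWord (m : ℕ) (w : Equiv.Perm (Fin (m + 1))) (l : List ℕ) : Prop :=
  (∀ j ∈ l, j < m) ∧ wordProd m l = w ∧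
    ∀ l' : List ℕ, (∀ j ∈ l', j < m) → wordProd m l' = w → l.length ≤ l'.length

/-- The set of simple transpositions `s_j` with `j ≠ i`. -/
def simplesAvoiding (m : ℕ) (i : ℕ) : Set (Equiv.Perm (Fin (m + 1))) :=
  {g | ∃ j : ℕ, j < m ∧ j ≠ i ∧ g = simpleT m j}

/-- Let `w ∈ S_n` and `1 ≤ i ≤ n-1`, and suppose that some reduced word for `w`
contains the letter `s_i` exactly once.  Then there exists `w'` in the subgroup generated by
`{s_j : j ≠ i}` such that `w' w` equals one of the following multiplicity-free elements:
`s_i`; or `s_i s_{i-1} ⋯ s_{i-δ}` for some `δ ≥ 1`; or `s_i s_{i+1} ⋯ s_{i+δ}` for some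
`δ ≥ 1`; or `s_i s_{i-1} ⋯ s_{i-δ⁻} s_{i+1} ⋯ s_{i+δ⁺}` for some `δ⁻, δ⁺ ≥ 1` (all indices
lying in the allowed range).  (0-based formalization, with `i < m`.) -/
lemma wordProd_nil (m : ℕ) : wordProd m [] = 1 := rfl
lemma wordProd_cons (m j : ℕ) (l : List ℕ) :
    wordProd m (j :: l) = simpleT m j * wordProd m l := by simp [wordProd]
lemma wordProd_append (m : ℕ) (l₁ l₂ : List ℕ) :
    wordProd m (l₁ ++ l₂) = wordProd m l₁ * wordProd m l₂ := by simp [wordProd]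
lemma simpleT_val {m j : ℕ} (hj : j < m) (x : Fin (m + 1)) :
    ((simpleT m j x : Fin (m + 1)) : ℕ) =
      if (x : ℕ) = j then j + 1 else if (x : ℕ) = j + 1 then j else (x : ℕ) := by
  simp only [simpleT, dif_pos hj, Equiv.swap_apply_def]
  split_ifs <;> simp_all [Fin.ext_iff]
def descWord (i δ : ℕ) : List ℕ := (List.range δ).map (fun t => i - 1 - t)
def ascWord (i δ : ℕ) : List ℕ := (List.range δ).map (fun t => i + 1 + t)
lemma descWord_succ (i δ : ℕ) : descWord i (δ + 1) = descWord i δ ++ [i - 1 - δ] := by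
  simp [descWord, List.range_succ]
lemma ascWord_succ (i δ : ℕ) : ascWord i (δ + 1) = ascWord i δ ++ [i + 1 + δ] := by
  simp [ascWord, List.range_succ]
lemma desc_val {m i : ℕ} (hi : i < m) :
    ∀ δ, δ ≤ i → ∀ x : Fin (m + 1),
    ((wordProd m (descWord i δ) x : Fin (m + 1)) : ℕ) =
      if (x : ℕ) = i - δ then i
      else if i - δ < (x : ℕ) ∧ (x : ℕ) ≤ i then (x : ℕ) - 1 else (x : ℕ) := by
  intro δ
  induction δ with
  | zero =>
    intro _ x
    simp only [descWord, List.range_zero, List.map_nil, wordProd_nil, Equiv.Perm.coe_one, id_eq]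
    split_ifs <;> omega
  | succ δ ih =>
    intro hδ x
    have h1 : (wordProd m (descWord i (δ + 1))) x
        = wordProd m (descWord i δ) (simpleT m (i - 1 - δ) x) := by
      rw [descWord_succ, wordProd_append, wordProd_cons, wordProd_nil, mul_one, Equiv.Perm.mul_apply]
    rw [h1, ih (by omega), simpleT_val (show i - 1 - δ < m by omega)]
    split_ifs <;> omega
lemma asc_val {m i : ℕ} :
    ∀ δ, i + δ < m → ∀ x : Fin (m + 1),
    ((wordProd m (ascWord i δ) x : Fin (m + 1)) : ℕ) =
      if i + 1 ≤ (x : ℕ) ∧ (x : ℕ) ≤ i + δ then (x : ℕ) + 1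
      else if (x : ℕ) = i + δ + 1 then i + 1 else (x : ℕ) := by
  intro δ
  induction δ with
  | zero =>
    intro _ x
    simp only [ascWord, List.range_zero, List.map_nil, wordProd_nil, Equiv.Perm.coe_one, id_eq]
    split_ifs <;> omega
  | succ δ ih =>
    intro hδ x
    have h1 : (wordProd m (ascWord i (δ + 1))) x
        = wordProd m (ascWord i δ) (simpleT m (i + 1 + δ) x) := by
      rw [ascWord_succ, wordProd_append, wordProd_cons, wordProd_nil, mul_one, Equiv.Perm.mul_apply]
    rw [h1, ih (by omega), simpleT_val (show i + 1 + δ < m by omega)]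
    split_ifs <;> omega

/-- canonical element -/
def cperm (m i δ₁ δ₂ : ℕ) : Equiv.Perm (Fin (m + 1)) :=
  wordProd m (i :: (descWord i δ₁ ++ ascWord i δ₂))

lemma cperm_val {m i δ₁ δ₂ : ℕ} (hi : i < m) (h1 : δ₁ ≤ i) (h2 : i + δ₂ < m)
    (x : Fin (m + 1)) :
    ((cperm m i δ₁ δ₂ x : Fin (m + 1)) : ℕ) =
      if (x : ℕ) = i - δ₁ then i + 1
      else if i - δ₁ < (x : ℕ) ∧ (x : ℕ) ≤ i then (x : ℕ) - 1
      else if i + 1 ≤ (x : ℕ) ∧ (x : ℕ) ≤ i + δ₂ then (x : ℕ) + 1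
      else if (x : ℕ) = i + δ₂ + 1 then i
      else (x : ℕ) := by
  have h3 : (cperm m i δ₁ δ₂) x
      = simpleT m i (wordProd m (descWord i δ₁) (wordProd m (ascWord i δ₂) x)) := by
    rw [cperm, wordProd_cons, wordProd_append, Equiv.Perm.mul_apply, Equiv.Perm.mul_apply]
  rw [h3, simpleT_val hi, desc_val hi δ₁ h1, asc_val δ₂ h2]
  split_ifs <;> omega

lemma simpleT_mem_closure {m i j : ℕ} (hj : j < m) (hne : j ≠ i) :
    simpleT m j ∈ Subgroup.closure (simplesAvoiding m i) :=
  Subgroup.subset_closure ⟨j, hj, hne, rfl⟩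

def Srel (j n y : ℕ) : Prop :=
  (n = j ∧ y = j + 1) ∨ (n = j + 1 ∧ y = j) ∨ (n ≠ j ∧ n ≠ j + 1 ∧ y = n)

def Crel (i δ₁ δ₂ n y : ℕ) : Prop :=
  (n = i - δ₁ ∧ y = i + 1) ∨
  (i - δ₁ < n ∧ n ≤ i ∧ y = n - 1) ∨
  (i + 1 ≤ n ∧ n ≤ i + δ₂ ∧ y = n + 1) ∨
  (n = i + δ₂ + 1 ∧ y = i) ∨
  (n ≠ i - δ₁ ∧ ¬(i - δ₁ < n ∧ n ≤ i) ∧ ¬(i + 1 ≤ n ∧ n ≤ i + δ₂) ∧ n ≠ i + δ₂ + 1 ∧ y = n)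

lemma simpleT_rel {m j : ℕ} (hj : j < m) (x : Fin (m + 1)) :
    Srel j (x : ℕ) ((simpleT m j x : Fin (m + 1)) : ℕ) := by
  unfold Srel
  rw [simpleT_val hj]
  split_ifs <;> omega

lemma cperm_rel {m i δ₁ δ₂ : ℕ} (hi : i < m) (h1 : δ₁ ≤ i) (h2 : i + δ₂ < m)
    (x : Fin (m + 1)) :
    Crel i δ₁ δ₂ (x : ℕ) ((cperm m i δ₁ δ₂ x : Fin (m + 1)) : ℕ) := by
  unfold Crel
  rw [cperm_val hi h1 h2]
  split_ifs <;> omega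

lemma step {m i : ℕ} (hi : i < m) {j δ₁ δ₂ : ℕ} (hj : j < m) (hne : j ≠ i)
    (h1 : δ₁ ≤ i) (h2 : i + δ₂ < m) :
    ∃ h ∈ Subgroup.closure (simplesAvoiding m i), ∃ δ₁' δ₂',
      δ₁' ≤ i ∧ i + δ₂' < m ∧
      cperm m i δ₁ δ₂ * simpleT m j = h * cperm m i δ₁' δ₂' := by
  have keyT : ∀ j' δ₁' δ₂', j' < m → j' ≠ i → δ₁' ≤ i → i + δ₂' < m →
      (∀ x : Fin (m+1),
        ((cperm m i δ₁ δ₂ (simpleT m j x) : Fin (m+1)) : ℕ)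
          = ((simpleT m j' (cperm m i δ₁' δ₂' x) : Fin (m+1)) : ℕ)) →
      ∃ h ∈ Subgroup.closure (simplesAvoiding m i), ∃ δ₁' δ₂',
        δ₁' ≤ i ∧ i + δ₂' < m ∧
        cperm m i δ₁ δ₂ * simpleT m j = h * cperm m i δ₁' δ₂' := by
    intro j' δ₁' δ₂' hj' hne' ha hb hpt
    refine ⟨simpleT m j', simpleT_mem_closure hj' hne', δ₁', δ₂', ha, hb, ?_⟩
    ext x
    simpa [Equiv.Perm.mul_apply] using hpt x
  have key1 : ∀ δ₁' δ₂', δ₁' ≤ i → i + δ₂' < m →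
      (∀ x : Fin (m+1),
        ((cperm m i δ₁ δ₂ (simpleT m j x) : Fin (m+1)) : ℕ)
          = ((cperm m i δ₁' δ₂' x : Fin (m+1)) : ℕ)) →
      ∃ h ∈ Subgroup.closure (simplesAvoiding m i), ∃ δ₁' δ₂',
        δ₁' ≤ i ∧ i + δ₂' < m ∧
        cperm m i δ₁ δ₂ * simpleT m j = h * cperm m i δ₁' δ₂' := by
    intro δ₁' δ₂' ha hb hpt
    refine ⟨1, one_mem _, δ₁', δ₂', ha, hb, ?_⟩
    ext x
    simpa [Equiv.Perm.mul_apply] using hpt x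
  rcases lt_trichotomy j i with hji | hji | hji
  · rcases Nat.lt_trichotomy (j + 1) (i - δ₁) with hc | hc | hc
    · -- far left: commutes, h = s_j
      apply keyT j δ₁ δ₂ hj hne h1 h2
      intro x
      have r1 := simpleT_rel hj x
      have r2 := cperm_rel hi h1 h2 (simpleT m j x)
      have r3 := cperm_rel hi h1 h2 x
      have r4 := simpleT_rel hj (cperm m i δ₁ δ₂ x)
      unfold Srel at r1 r4; unfold Crel at r2 r3
      omega
    · -- j + 1 = i - δ₁ : extend left
      apply key1 (δ₁ + 1) δ₂ (by omega) h2
      intro x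
      have r1 := simpleT_rel hj x
      have r2 := cperm_rel hi h1 h2 (simpleT m j x)
      have r3 := cperm_rel hi (show δ₁ + 1 ≤ i by omega) h2 x
      unfold Srel at r1; unfold Crel at r2 r3
      omega
    · rcases Nat.eq_or_lt_of_le (Nat.succ_le_of_lt hc) with hc2 | hc2
      · -- j = i - δ₁ : shrink left
        have hδ : 1 ≤ δ₁ := by omega
        apply key1 (δ₁ - 1) δ₂ (by omega) h2
        intro x
        have r1 := simpleT_rel hj x
        have r2 := cperm_rel hi h1 h2 (simpleT m j x)
        have r3 := cperm_rel hi (show δ₁ - 1 ≤ i by omega) h2 x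
        unfold Srel at r1; unfold Crel at r2 r3
        omega
      · -- i - δ₁ < j < i : h = s_{j-1}
        apply keyT (j - 1) δ₁ δ₂ (by omega) (by omega) h1 h2
        intro x
        have r1 := simpleT_rel hj x
        have r2 := cperm_rel hi h1 h2 (simpleT m j x)
        have r3 := cperm_rel hi h1 h2 x
        have r4 := simpleT_rel (show j - 1 < m by omega) (cperm m i δ₁ δ₂ x)
        unfold Srel at r1 r4; unfold Crel at r2 r3
        omega
  · exact absurd hji hne
  · rcases Nat.lt_trichotomy j (i + δ₂) with hc | hc | hc
    · -- i < j < i + δ₂ : h = s_{j+1}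
      apply keyT (j + 1) δ₁ δ₂ (by omega) (by omega) h1 h2
      intro x
      have r1 := simpleT_rel hj x
      have r2 := cperm_rel hi h1 h2 (simpleT m j x)
      have r3 := cperm_rel hi h1 h2 x
      have r4 := simpleT_rel (show j + 1 < m by omega) (cperm m i δ₁ δ₂ x)
      unfold Srel at r1 r4; unfold Crel at r2 r3
      omega
    · -- j = i + δ₂ : shrink right
      have hδ : 1 ≤ δ₂ := by omega
      apply key1 δ₁ (δ₂ - 1) h1 (by omega)
      intro x
      have r1 := simpleT_rel hj x
      have r2 := cperm_rel hi h1 h2 (simpleT m j x)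
      have r3 := cperm_rel hi h1 (show i + (δ₂ - 1) < m by omega) x
      unfold Srel at r1; unfold Crel at r2 r3
      omega
    · rcases Nat.eq_or_lt_of_le (Nat.succ_le_of_lt hc) with hc2 | hc2
      · -- j = i + δ₂ + 1 : extend right
        apply key1 δ₁ (δ₂ + 1) h1 (by omega)
        intro x
        have r1 := simpleT_rel hj x
        have r2 := cperm_rel hi h1 h2 (simpleT m j x)
        have r3 := cperm_rel hi h1 (show i + (δ₂ + 1) < m by omega) x
        unfold Srel at r1; unfold Crel at r2 r3
        omega
      · -- far right: commutes, h = s_j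
        apply keyT j δ₁ δ₂ hj hne h1 h2
        intro x
        have r1 := simpleT_rel hj x
        have r2 := cperm_rel hi h1 h2 (simpleT m j x)
        have r3 := cperm_rel hi h1 h2 x
        have r4 := simpleT_rel hj (cperm m i δ₁ δ₂ x)
        unfold Srel at r1 r4; unfold Crel at r2 r3
        omega


lemma push {m i : ℕ} (hi : i < m) :
    ∀ (b : List ℕ), (∀ j ∈ b, j < m ∧ j ≠ i) →
    ∀ δ₁ δ₂, δ₁ ≤ i → i + δ₂ < m →
    ∃ h ∈ Subgroup.closure (simplesAvoiding m i), ∃ δ₁' δ₂',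
      δ₁' ≤ i ∧ i + δ₂' < m ∧
      cperm m i δ₁ δ₂ * wordProd m b = h * cperm m i δ₁' δ₂' := by
  intro b
  induction b with
  | nil =>
    intro _ δ₁ δ₂ h1 h2
    exact ⟨1, one_mem _, δ₁, δ₂, h1, h2, by simp [wordProd_nil]⟩
  | cons j b ih =>
    intro hb δ₁ δ₂ h1 h2
    obtain ⟨hjm, hjne⟩ := hb j List.mem_cons_self
    obtain ⟨h₀, hh₀, δ₁', δ₂', ha', hb', heq⟩ := step hi hjm hjne h1 h2
    obtain ⟨h₁, hh₁, δ₁'', δ₂'', ha'', hb'', heq2⟩ :=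
      ih (fun k hk => hb k (List.mem_cons_of_mem _ hk)) δ₁' δ₂' ha' hb'
    refine ⟨h₀ * h₁, mul_mem hh₀ hh₁, δ₁'', δ₂'', ha'', hb'', ?_⟩
    rw [wordProd_cons, ← mul_assoc, heq, mul_assoc, heq2, ← mul_assoc]

lemma wordProd_mem_closure {m i : ℕ} (b : List ℕ) (hb : ∀ j ∈ b, j < m ∧ j ≠ i) :
    wordProd m b ∈ Subgroup.closure (simplesAvoiding m i) := by
  induction b with
  | nil => exact (wordProd_nil m) ▸ one_mem _
  | cons j b ih =>
    rw [wordProd_cons]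
    exact mul_mem (simpleT_mem_closure (hb j List.mem_cons_self).1
      (hb j List.mem_cons_self).2)
      (ih fun k hk => hb k (List.mem_cons_of_mem _ hk))

theorem statement10 {m : ℕ} (i : ℕ) (hi : i < m) (w : Equiv.Perm (Fin (m + 1)))
    (hmult : ∃ l : List ℕ, IsReducedWord m w l ∧ l.count i = 1) :
    ∃ w' ∈ Subgroup.closure (simplesAvoiding m i),
      (w' * w = simpleT m i) ∨
      (∃ δ : ℕ, 1 ≤ δ ∧ δ ≤ i ∧
        w' * w = wordProd m (i :: (List.range δ).map (fun t => i - 1 - t))) ∨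
      (∃ δ : ℕ, 1 ≤ δ ∧ i + δ < m ∧
        w' * w = wordProd m (i :: (List.range δ).map (fun t => i + 1 + t))) ∨
      (∃ δ₁ δ₂ : ℕ, 1 ≤ δ₁ ∧ 1 ≤ δ₂ ∧ δ₁ ≤ i ∧ i + δ₂ < m ∧
        w' * w = wordProd m
          (i :: ((List.range δ₁).map (fun t => i - 1 - t) ++
                 (List.range δ₂).map (fun t => i + 1 + t)))) := by
  obtain ⟨l, ⟨hlt, hprod, -⟩, hcount⟩ := hmult
  have hmem : i ∈ l := by
    rw [← List.count_pos_iff]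
    omega
  obtain ⟨a, b, rfl⟩ := List.append_of_mem hmem
  have hca : a.count i = 0 ∧ b.count i = 0 := by
    rw [List.count_append, List.count_cons_self] at hcount
    omega
  have hea : ∀ j ∈ a, j < m ∧ j ≠ i := fun j hj =>
    ⟨hlt j (List.mem_append_left _ hj),
     fun h => (List.count_eq_zero.mp hca.1) (h ▸ hj)⟩
  have heb : ∀ j ∈ b, j < m ∧ j ≠ i := fun j hj =>
    ⟨hlt j (List.mem_append_right _ (List.mem_cons_of_mem _ hj)),
     fun h => (List.count_eq_zero.mp hca.2) (h ▸ hj)⟩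
  -- cperm m i 0 0 = simpleT m i
  have hc00 : cperm m i 0 0 = simpleT m i := by
    simp [cperm, descWord, ascWord, wordProd_cons, wordProd_nil]
  obtain ⟨h, hh, δ₁, δ₂, h1, h2, heq⟩ := push hi b heb 0 0 (by omega) (by omega)
  refine ⟨h⁻¹ * (wordProd m a)⁻¹, mul_mem (inv_mem hh) (inv_mem (wordProd_mem_closure a hea)), ?_⟩
  have hww : (h⁻¹ * (wordProd m a)⁻¹) * w = cperm m i δ₁ δ₂ := by
    rw [← hprod, wordProd_append, wordProd_cons, ← hc00]
    calc h⁻¹ * (wordProd m a)⁻¹ * (wordProd m a * (cperm m i 0 0 * wordProd m b))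
        = h⁻¹ * (cperm m i 0 0 * wordProd m b) := by group
      _ = h⁻¹ * (h * cperm m i δ₁ δ₂) := by rw [heq]
      _ = cperm m i δ₁ δ₂ := by group
  rw [hww]
  rcases Nat.eq_zero_or_pos δ₁ with hz1 | hz1 <;> rcases Nat.eq_zero_or_pos δ₂ with hz2 | hz2
  · subst hz1; subst hz2
    exact Or.inl hc00
  · subst hz1
    refine Or.inr (Or.inr (Or.inl ⟨δ₂, hz2, by omega, ?_⟩))
    simp [cperm, descWord, ascWord]
  · subst hz2
    refine Or.inr (Or.inl ⟨δ₁, hz1, h1, ?_⟩)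
    simp [cperm, descWord, ascWord]
  · exact Or.inr (Or.inr (Or.inr ⟨δ₁, δ₂, hz1, hz2, h1, by omega, rfl⟩))
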